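/- For any finite poset P and any m ≥ 1, the weak distribution μ_{m,≤} on J(P) is toggle-symmetric. -/

import Mathlib

open Finset
open scoped Classical

noncomputable section

variable {α : Type*} [Fintype α] [PartialOrder α]

/-- `I` is an order ideal (down-set) of the finite poset `α`. -/
def IsIdeal (I : Finset α) : Prop := ∀ p ∈ I, ∀ q : α, q ≤ p → q ∈ I

/-- The set `J(P)` of all order ideals of the finite poset `α`. -/
def idealsFinset (α : Type*) [Fintype α] [PartialOrder α] : Finset (Finset α) :=
  Finset.univ.filter fun I => IsIdeal I

/-- `p` can be toggled in to the order ideal `I`. -/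
def CanToggleIn (I : Finset α) (p : α) : Prop := p ∉ I ∧ IsIdeal (insert p I)

/-- `p` can be toggled out of the order ideal `I`. -/
def CanToggleOut (I : Finset α) (p : α) : Prop := p ∈ I ∧ IsIdeal (I.erase p)

/-- The jaggedness of `I`: the number of elements that can be toggled in,
plus the number of elements that can be toggled out. -/
def jag (I : Finset α) : ℕ :=
  (Finset.univ.filter fun p => CanToggleIn I p).card +
  (Finset.univ.filter fun p => CanToggleOut I p).card

/-- The probability, under `μ`, that a random order ideal satisfies `E`. -/
def prIdeal (μ : Finset α → ℝ) (E : Finset α → Prop) : ℝ :=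
  ∑ I ∈ (idealsFinset α).filter E, μ I

/-- `μ` is toggle-symmetric: for every `p`, the probability that `p` can be toggled in
equals the probability that `p` can be toggled out. -/
def ToggleSymmetric (μ : Finset α → ℝ) : Prop :=
  ∀ p : α, prIdeal μ (fun I => CanToggleIn I p) = prIdeal μ (fun I => CanToggleOut I p)

/-- `μ` is a probability distribution on `J(P)`. -/
def IsProbDist (μ : Finset α → ℝ) : Prop :=
  (∀ I, 0 ≤ μ I) ∧ (∀ I, ¬ IsIdeal I → μ I = 0) ∧ (∑ I ∈ idealsFinset α, μ I = 1)

/-- The expectation of the statistic `f` with respect to `μ`. -/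
def expectStat (μ : Finset α → ℝ) (f : Finset α → ℝ) : ℝ :=
  ∑ I ∈ idealsFinset α, μ I * f I

/-- The linear extensions of `α`: order-preserving bijections `α ≃ {1,…,n}`. -/
def linExts (α : Type*) [Fintype α] [PartialOrder α] :
    Finset (α ≃ Fin (Fintype.card α)) :=
  Finset.univ.filter fun e => ∀ p q : α, p ≤ q → e p ≤ e q

/-- The linear distribution `μ_lin` on `J(P)`: the distribution of `ℓ⁻¹({1,…,k})` for a
uniformly random linear extension `ℓ` and uniform `k ∈ {0,1,…,n}`. -/
def muLin (α : Type*) [Fintype α] [PartialOrder α] (I : Finset α) : ℝ :=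
  (∑ e ∈ linExts α, ∑ k ∈ Finset.range (Fintype.card α + 1),
      if Finset.univ.filter (fun p => (e p : ℕ) < k) = I then (1 : ℝ) else 0) /
    ((linExts α).card * (Fintype.card α + 1))

/-- Weak reverse `P`-partitions of height `m`: order-preserving maps `α → {0,1,…,m}`. -/
def wrpp (α : Type*) [Fintype α] [PartialOrder α] (m : ℕ) : Finset (α → Fin (m + 1)) :=
  Finset.univ.filter fun ℓ => ∀ p q : α, p ≤ q → ℓ p ≤ ℓ q

/-- The weak distribution `μ_{m,≤}` on `J(P)`: the distribution of `ℓ⁻¹({0,…,k−1})` for a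
uniformly random weak reverse `P`-partition `ℓ` of height `m` and uniform `k ∈ {1,…,m}`. -/
def muWeak (α : Type*) [Fintype α] [PartialOrder α] (m : ℕ) (I : Finset α) : ℝ :=
  (∑ ℓ ∈ wrpp α m, ∑ k ∈ Finset.Icc 1 m,
      if Finset.univ.filter (fun p => (ℓ p : ℕ) < k) = I then (1 : ℝ) else 0) /
    ((wrpp α m).card * m)

namespace MuWeakAux

variable {α : Type*} [Fintype α] [PartialOrder α] {m : ℕ}

/-- Monotonicity in ℕ-values. -/
def Mono (ℓ : α → Fin (m + 1)) : Prop := ∀ a b : α, a ≤ b → (ℓ a : ℕ) ≤ (ℓ b : ℕ)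

lemma mem_wrpp_iff {ℓ : α → Fin (m + 1)} : ℓ ∈ wrpp α m ↔ Mono ℓ := by
  unfold wrpp Mono
  simp only [Finset.mem_filter, Finset.mem_univ, true_and, Fin.le_def]

def Ilk (ℓ : α → Fin (m + 1)) (k : ℕ) : Finset α :=
  Finset.univ.filter fun q => (ℓ q : ℕ) < k

lemma mem_Ilk {ℓ : α → Fin (m + 1)} {k : ℕ} {q : α} : q ∈ Ilk ℓ k ↔ (ℓ q : ℕ) < k := by
  simp [Ilk]

lemma isIdeal_Ilk {ℓ : α → Fin (m + 1)} (hℓ : Mono ℓ) (k : ℕ) : IsIdeal (Ilk ℓ k) :=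
  fun x hx q hq => mem_Ilk.mpr (lt_of_le_of_lt (hℓ q x hq) (mem_Ilk.mp hx))

lemma canToggleIn_iff {ℓ : α → Fin (m + 1)} (hℓ : Mono ℓ) {k : ℕ} (p : α) :
    CanToggleIn (Ilk ℓ k) p ↔ (∀ q, q < p → (ℓ q : ℕ) < k) ∧ k ≤ (ℓ p : ℕ) := by
  constructor
  · rintro ⟨hnot, hins⟩
    refine ⟨fun q hq => ?_, not_lt.mp fun h => hnot (mem_Ilk.mpr h)⟩
    have := hins p (Finset.mem_insert_self p _) q hq.le
    rcases Finset.mem_insert.mp this with h | h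
    · exact absurd h hq.ne
    · exact mem_Ilk.mp h
  · rintro ⟨h1, h2⟩
    refine ⟨fun h => absurd (mem_Ilk.mp h) (not_lt.mpr h2), ?_⟩
    intro x hx q hq
    rcases Finset.mem_insert.mp hx with rfl | hx
    · rcases eq_or_lt_of_le hq with rfl | hq'
      · exact Finset.mem_insert_self _ _
      · exact Finset.mem_insert_of_mem (mem_Ilk.mpr (h1 q hq'))
    · exact Finset.mem_insert_of_mem (isIdeal_Ilk hℓ k x hx q hq)

lemma canToggleOut_iff {ℓ : α → Fin (m + 1)} (hℓ : Mono ℓ) {k : ℕ} (p : α) :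
    CanToggleOut (Ilk ℓ k) p ↔ (ℓ p : ℕ) < k ∧ ∀ q, p < q → k ≤ (ℓ q : ℕ) := by
  constructor
  · rintro ⟨hmem, hers⟩
    refine ⟨mem_Ilk.mp hmem, fun q hq => ?_⟩
    by_contra h
    push_neg at h
    have hq' : q ∈ (Ilk ℓ k).erase p := Finset.mem_erase.mpr ⟨hq.ne', mem_Ilk.mpr h⟩
    have := hers q hq' p hq.le
    exact (Finset.mem_erase.mp this).1 rfl
  · rintro ⟨h1, h2⟩
    refine ⟨mem_Ilk.mpr h1, ?_⟩
    intro x hx q hq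
    obtain ⟨hxp, hxI⟩ := Finset.mem_erase.mp hx
    refine Finset.mem_erase.mpr ⟨?_, isIdeal_Ilk hℓ k x hxI q hq⟩
    rintro rfl
    exact absurd (mem_Ilk.mp hxI) (not_lt.mpr (h2 x (lt_of_le_of_ne hq (Ne.symm hxp))))

def Av (p : α) (ℓ : α → Fin (m + 1)) : ℕ :=
  (Finset.univ.filter fun q => q < p).sup fun q => (ℓ q : ℕ)

def Bv (p : α) (ℓ : α → Fin (m + 1)) : ℕ :=
  m - (Finset.univ.filter fun q => p < q).sup fun q => m - (ℓ q : ℕ)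

lemma Av_le {p : α} {ℓ : α → Fin (m + 1)} (hℓ : Mono ℓ) : Av p ℓ ≤ (ℓ p : ℕ) :=
  Finset.sup_le fun q hq => hℓ q p (le_of_lt (Finset.mem_filter.mp hq).2)

lemma le_Av {p q : α} {ℓ : α → Fin (m + 1)} (h : q < p) : (ℓ q : ℕ) ≤ Av p ℓ := by
  unfold Av
  exact Finset.le_sup (f := fun r => (ℓ r : ℕ)) (Finset.mem_filter.mpr ⟨Finset.mem_univ q, h⟩)

lemma Av_lt_iff {p : α} {ℓ : α → Fin (m + 1)} {k : ℕ} (hk : 0 < k) :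
    Av p ℓ < k ↔ ∀ q, q < p → (ℓ q : ℕ) < k := by
  unfold Av
  rw [Finset.sup_lt_iff hk]
  simp

lemma le_Bv_iff {p : α} {ℓ : α → Fin (m + 1)} {k : ℕ} :
    k ≤ Bv p ℓ ↔ k ≤ m ∧ ∀ q, p < q → k ≤ (ℓ q : ℕ) := by
  unfold Bv
  constructor
  · intro h
    refine ⟨by omega, fun q hq => ?_⟩
    have h1 : m - (ℓ q : ℕ) ≤ (Finset.univ.filter fun q => p < q).sup fun q => m - (ℓ q : ℕ) :=
      Finset.le_sup (f := fun r => m - (ℓ r : ℕ))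
        (Finset.mem_filter.mpr ⟨Finset.mem_univ q, hq⟩)
    have h2 : (ℓ q : ℕ) ≤ m := Nat.lt_succ_iff.mp (ℓ q).isLt
    omega
  · rintro ⟨hkm, h⟩
    have : ((Finset.univ.filter fun q => p < q).sup fun q => m - (ℓ q : ℕ)) ≤ m - k :=
      Finset.sup_le fun q hq => by have := h q (Finset.mem_filter.mp hq).2; omega
    omega

lemma lp_le_Bv {p : α} {ℓ : α → Fin (m + 1)} (hℓ : Mono ℓ) : (ℓ p : ℕ) ≤ Bv p ℓ :=
  le_Bv_iff.mpr ⟨Nat.lt_succ_iff.mp (ℓ p).isLt, fun q hq => hℓ p q hq.le⟩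

lemma Bv_le {p : α} {ℓ : α → Fin (m + 1)} : Bv p ℓ ≤ m := Nat.sub_le _ _

lemma Bv_le_of_gt {p q : α} {ℓ : α → Fin (m + 1)} (h : p < q) : Bv p ℓ ≤ (ℓ q : ℕ) :=
  (le_Bv_iff.mp le_rfl).2 q h

lemma Av_update {p : α} {ℓ : α → Fin (m + 1)} (v : Fin (m + 1)) :
    Av p (Function.update ℓ p v) = Av p ℓ :=
  Finset.sup_congr rfl fun q hq => by
    rw [Function.update_of_ne (ne_of_lt (by simpa using hq))]

lemma Bv_update {p : α} {ℓ : α → Fin (m + 1)} (v : Fin (m + 1)) :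
    Bv p (Function.update ℓ p v) = Bv p ℓ := by
  unfold Bv
  congr 1
  exact Finset.sup_congr rfl fun q hq => by
    rw [Function.update_of_ne (ne_of_gt (by simpa using hq))]

lemma update_mono {p : α} {ℓ : α → Fin (m + 1)} (hℓ : Mono ℓ) {v : Fin (m + 1)}
    (hA : Av p ℓ ≤ (v : ℕ)) (hB : (v : ℕ) ≤ Bv p ℓ) : Mono (Function.update ℓ p v) := by
  intro a b hab
  rcases eq_or_ne a p with rfl | ha
  · rw [Function.update_self]
    rcases eq_or_ne b a with rfl | hb
    · rw [Function.update_self]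
    · rw [Function.update_of_ne hb]
      exact le_trans hB (Bv_le_of_gt (lt_of_le_of_ne hab (Ne.symm hb)))
  · rw [Function.update_of_ne ha]
    rcases eq_or_ne b p with rfl | hb
    · rw [Function.update_self]
      exact le_trans (le_Av (lt_of_le_of_ne hab ha)) hA
    · rw [Function.update_of_ne hb]
      exact hℓ a b hab

/-- The toggling involution on pairs. -/
def phi (p : α) (x : (α → Fin (m + 1)) × ℕ) : (α → Fin (m + 1)) × ℕ :=
  (Function.update x.1 p
      ⟨min (Av p x.1 + Bv p x.1 - (x.1 p : ℕ)) m, Nat.lt_succ_of_le (min_le_right _ _)⟩,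
   Av p x.1 + Bv p x.1 + 1 - x.2)

lemma phi_fst_val {p : α} {ℓ : α → Fin (m + 1)} (hℓ : Mono ℓ) (k : ℕ) :
    ((phi p (ℓ, k)).1 p : ℕ) = Av p ℓ + Bv p ℓ - (ℓ p : ℕ) := by
  have h1 := Av_le (p := p) hℓ
  have h2 := lp_le_Bv (p := p) hℓ
  have h3 := Bv_le (p := p) (ℓ := ℓ)
  simp only [phi, Function.update_self]
  omega

lemma phi_fst_ne {p q : α} {ℓ : α → Fin (m + 1)} {k : ℕ} (hq : q ≠ p) :
    (phi p (ℓ, k)).1 q = ℓ q := by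
  simp [phi, Function.update_of_ne hq]

lemma phi_fst_mono {p : α} {ℓ : α → Fin (m + 1)} (hℓ : Mono ℓ) (k : ℕ) :
    Mono (phi p (ℓ, k)).1 := by
  have h1 := Av_le (p := p) hℓ
  have h2 := lp_le_Bv (p := p) hℓ
  have h3 := Bv_le (p := p) (ℓ := ℓ)
  refine update_mono hℓ ?_ ?_
  · show Av p ℓ ≤ min (Av p ℓ + Bv p ℓ - (ℓ p : ℕ)) m
    omega
  · show min (Av p ℓ + Bv p ℓ - (ℓ p : ℕ)) m ≤ Bv p ℓ
    omega

lemma Av_phi {p : α} {ℓ : α → Fin (m + 1)} (k : ℕ) : Av p (phi p (ℓ, k)).1 = Av p ℓ :=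
  Av_update _

lemma Bv_phi {p : α} {ℓ : α → Fin (m + 1)} (k : ℕ) : Bv p (phi p (ℓ, k)).1 = Bv p ℓ :=
  Bv_update _

lemma phi_phi {p : α} {ℓ : α → Fin (m + 1)} {k : ℕ} (hℓ : Mono ℓ)
    (hk1 : 1 ≤ k) (hk2 : k ≤ Av p ℓ + Bv p ℓ) : phi p (phi p (ℓ, k)) = (ℓ, k) := by
  have h1 := Av_le (p := p) hℓ
  have h2 := lp_le_Bv (p := p) hℓ
  have h3 := Bv_le (p := p) (ℓ := ℓ)
  have hA := Av_phi (p := p) (ℓ := ℓ) k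
  have hB := Bv_phi (p := p) (ℓ := ℓ) k
  have hv := phi_fst_val (p := p) hℓ k
  have hm := phi_fst_mono (p := p) hℓ k
  have hv2 : ((phi p (phi p (ℓ, k))).1 p : ℕ)
      = Av p (phi p (ℓ, k)).1 + Bv p (phi p (ℓ, k)).1 - ((phi p (ℓ, k)).1 p : ℕ) :=
    phi_fst_val (p := p) (ℓ := (phi p (ℓ, k)).1) hm ((phi p (ℓ, k)).2)
  ext1
  · funext r
    rcases eq_or_ne r p with h | hr
    · rw [h]
      apply Fin.ext
      show ((phi p (phi p (ℓ, k))).1 p : ℕ) = (ℓ p : ℕ)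
      rw [hv2, hA, hB, hv]
      omega
    · have hne : (phi p (phi p (ℓ, k))).1 r = (phi p (ℓ, k)).1 r :=
        phi_fst_ne (ℓ := (phi p (ℓ, k)).1) (k := (phi p (ℓ, k)).2) hr
      rw [show ((ℓ, k).1 r) = ℓ r from rfl, hne, phi_fst_ne hr]
  · show Av p (phi p (ℓ, k)).1 + Bv p (phi p (ℓ, k)).1 + 1 - (phi p (ℓ, k)).2 = k
    rw [hA, hB]
    show _ + 1 - (Av p ℓ + Bv p ℓ + 1 - k) = k
    omega

lemma phi_mem_out (p : α) {x : (α → Fin (m + 1)) × ℕ}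
    (hx : x ∈ (wrpp α m ×ˢ Finset.Icc 1 m).filter fun x => CanToggleIn (Ilk x.1 x.2) p) :
    phi p x ∈ (wrpp α m ×ˢ Finset.Icc 1 m).filter fun x => CanToggleOut (Ilk x.1 x.2) p := by
  obtain ⟨ℓ, k⟩ := x
  simp only [Finset.mem_filter, Finset.mem_product, Finset.mem_Icc] at hx ⊢
  obtain ⟨⟨hW, hk1, hk2⟩, hC⟩ := hx
  have hℓ : Mono ℓ := mem_wrpp_iff.mp hW
  obtain ⟨hall, hkle⟩ := (canToggleIn_iff hℓ p).mp hC
  have hAlt : Av p ℓ < k := (Av_lt_iff (by omega)).mpr hall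
  have h1 := Av_le (p := p) hℓ
  have h2 := lp_le_Bv (p := p) hℓ
  have h3 := Bv_le (p := p) (ℓ := ℓ)
  have hm' : Mono (phi p (ℓ, k)).1 := phi_fst_mono hℓ k
  refine ⟨⟨mem_wrpp_iff.mpr hm', ?_, ?_⟩, ?_⟩
  · show 1 ≤ Av p ℓ + Bv p ℓ + 1 - k
    omega
  · show Av p ℓ + Bv p ℓ + 1 - k ≤ m
    omega
  · refine (canToggleOut_iff hm' p).mpr ⟨?_, ?_⟩
    · rw [phi_fst_val hℓ k]
      show Av p ℓ + Bv p ℓ - (ℓ p : ℕ) < Av p ℓ + Bv p ℓ + 1 - k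
      omega
    · intro q hq
      rw [phi_fst_ne hq.ne']
      have := Bv_le_of_gt (ℓ := ℓ) hq
      show Av p ℓ + Bv p ℓ + 1 - k ≤ (ℓ q : ℕ)
      omega

lemma phi_mem_in (p : α) {x : (α → Fin (m + 1)) × ℕ}
    (hx : x ∈ (wrpp α m ×ˢ Finset.Icc 1 m).filter fun x => CanToggleOut (Ilk x.1 x.2) p) :
    phi p x ∈ (wrpp α m ×ˢ Finset.Icc 1 m).filter fun x => CanToggleIn (Ilk x.1 x.2) p := by
  obtain ⟨ℓ, k⟩ := x
  simp only [Finset.mem_filter, Finset.mem_product, Finset.mem_Icc] at hx ⊢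
  obtain ⟨⟨hW, hk1, hk2⟩, hC⟩ := hx
  have hℓ : Mono ℓ := mem_wrpp_iff.mp hW
  obtain ⟨hlt, hall⟩ := (canToggleOut_iff hℓ p).mp hC
  have hkB : k ≤ Bv p ℓ := le_Bv_iff.mpr ⟨hk2, hall⟩
  have h1 := Av_le (p := p) hℓ
  have h2 := lp_le_Bv (p := p) hℓ
  have h3 := Bv_le (p := p) (ℓ := ℓ)
  have hm' : Mono (phi p (ℓ, k)).1 := phi_fst_mono hℓ k
  refine ⟨⟨mem_wrpp_iff.mpr hm', ?_, ?_⟩, ?_⟩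
  · show 1 ≤ Av p ℓ + Bv p ℓ + 1 - k
    omega
  · show Av p ℓ + Bv p ℓ + 1 - k ≤ m
    omega
  · refine (canToggleIn_iff hm' p).mpr ⟨?_, ?_⟩
    · intro q hq
      rw [phi_fst_ne (ne_of_lt hq)]
      have := le_Av (ℓ := ℓ) hq
      show (ℓ q : ℕ) < Av p ℓ + Bv p ℓ + 1 - k
      omega
    · rw [phi_fst_val hℓ k]
      show Av p ℓ + Bv p ℓ + 1 - k ≤ Av p ℓ + Bv p ℓ - (ℓ p : ℕ)
      omega

lemma key_count (p : α) :
    ((wrpp α m ×ˢ Finset.Icc 1 m).filter fun x => CanToggleIn (Ilk x.1 x.2) p).card =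
      ((wrpp α m ×ˢ Finset.Icc 1 m).filter fun x => CanToggleOut (Ilk x.1 x.2) p).card := by
  refine Finset.card_nbij' (phi p) (phi p) (fun x hx => phi_mem_out p hx)
    (fun x hx => phi_mem_in p hx) ?_ ?_
  · rintro ⟨ℓ, k⟩ hx
    simp only [Finset.mem_coe, Finset.mem_filter, Finset.mem_product, Finset.mem_Icc] at hx
    obtain ⟨⟨hW, hk1, hk2⟩, hC⟩ := hx
    have hℓ : Mono ℓ := mem_wrpp_iff.mp hW
    obtain ⟨hall, hkle⟩ := (canToggleIn_iff hℓ p).mp hC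
    have h2 := lp_le_Bv (p := p) hℓ
    exact phi_phi hℓ hk1 (by omega)
  · rintro ⟨ℓ, k⟩ hx
    simp only [Finset.mem_coe, Finset.mem_filter, Finset.mem_product, Finset.mem_Icc] at hx
    obtain ⟨⟨hW, hk1, hk2⟩, hC⟩ := hx
    have hℓ : Mono ℓ := mem_wrpp_iff.mp hW
    obtain ⟨hlt, hall⟩ := (canToggleOut_iff hℓ p).mp hC
    have hkB : k ≤ Bv p ℓ := le_Bv_iff.mpr ⟨hk2, hall⟩
    exact phi_phi hℓ hk1 (by omega)

lemma sum_sum_eq_card (C : (α → Fin (m + 1)) → ℕ → Prop) :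
    (∑ ℓ ∈ wrpp α m, ∑ k ∈ Finset.Icc 1 m, if C ℓ k then (1 : ℝ) else 0)
      = (((wrpp α m ×ˢ Finset.Icc 1 m).filter fun x => C x.1 x.2).card : ℝ) := by
  calc (∑ ℓ ∈ wrpp α m, ∑ k ∈ Finset.Icc 1 m, if C ℓ k then (1 : ℝ) else 0)
      = ∑ x ∈ wrpp α m ×ˢ Finset.Icc 1 m,
          (fun a b => if C a b then (1 : ℝ) else 0) x.1 x.2 :=
        (Finset.sum_product' (wrpp α m) (Finset.Icc 1 m) fun a b => if C a b then (1 : ℝ) else 0).symm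
    _ = ∑ _x ∈ (wrpp α m ×ˢ Finset.Icc 1 m).filter fun x => C x.1 x.2, (1 : ℝ) :=
        (Finset.sum_filter _ _).symm
    _ = _ := by simp

lemma prIdeal_muWeak (E : Finset α → Prop) :
    prIdeal (muWeak α m) E =
      (∑ ℓ ∈ wrpp α m, ∑ k ∈ Finset.Icc 1 m, if E (Ilk ℓ k) then (1 : ℝ) else 0) /
        ((wrpp α m).card * m) := by
  simp only [prIdeal, muWeak]
  rw [← Finset.sum_div]
  congr 1
  rw [Finset.sum_comm]
  refine Finset.sum_congr rfl fun ℓ hℓ => ?_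
  rw [Finset.sum_comm]
  refine Finset.sum_congr rfl fun k hk => ?_
  have hI : IsIdeal (Ilk ℓ k) := isIdeal_Ilk (mem_wrpp_iff.mp hℓ) k
  rw [Finset.sum_ite_eq]
  by_cases hE : E (Ilk ℓ k)
  · rw [if_pos hE, if_pos]
    exact Finset.mem_filter.mpr ⟨Finset.mem_filter.mpr ⟨Finset.mem_univ _, hI⟩, hE⟩
  · rw [if_neg hE, if_neg]
    intro hmem
    exact hE (Finset.mem_filter.mp hmem).2

end MuWeakAux

/-- Lemma 2.7, weak case: for any finite poset and any `m ≥ 1`, the weak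
distribution `μ_{m,≤}` is toggle-symmetric. -/
theorem muWeak_toggleSymmetric (α : Type*) [Fintype α] [PartialOrder α]
    (m : ℕ) (hm : 1 ≤ m) : ToggleSymmetric (muWeak α m) := by
  intro p
  rw [MuWeakAux.prIdeal_muWeak, MuWeakAux.prIdeal_muWeak]
  congr 1
  rw [MuWeakAux.sum_sum_eq_card (fun ℓ k => CanToggleIn (MuWeakAux.Ilk ℓ k) p),
    MuWeakAux.sum_sum_eq_card (fun ℓ k => CanToggleOut (MuWeakAux.Ilk ℓ k) p),
    MuWeakAux.key_count p]
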